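/- For every σ ∈ S_n, the double coset J·d_σ·w_σ·J is contained in N⁻_p·d_σ·w_σ·J; that is, every element of J·d_σ·w_σ·J can be written as l·d_σ·w_σ·j, where l is a lower unitriangular matrix whose entries strictly below the diagonal lie in pℤ_p and j ∈ J. -/

import Mathlib

open Matrix MeasureTheory Pointwise

variable (p n : ℕ) [Fact p.Prime]

/-- The `(i,j)` entry of an element of `GL n ℚ_[p]`. -/
def entry (g : GL (Fin n) ℚ_[p]) (i j : Fin n) : ℚ_[p] :=
  (g : Matrix (Fin n) (Fin n) ℚ_[p]) i j

/-- The Iwahori subgroup `J`, as a subset of `GL n ℚ_[p]`: matrices of `GL_n(ℤ_p)`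
(integral matrix with integral inverse) whose entries strictly below the diagonal
lie in `pℤ_p` (i.e. have norm `< 1`). -/
def Jset : Set (GL (Fin n) ℚ_[p]) :=
  {g | (∀ i j, ‖entry p n g i j‖ ≤ 1) ∧ (∀ i j, ‖entry p n g⁻¹ i j‖ ≤ 1) ∧
       ∀ i j : Fin n, j < i → ‖entry p n g i j‖ < 1}

/-- The diagonal torus `T`. -/
def Tset : Set (GL (Fin n) ℚ_[p]) :=
  {g | ∀ i j : Fin n, i ≠ j → entry p n g i j = 0}

/-- The group `N` of upper unitriangular matrices. -/
def Nset : Set (GL (Fin n) ℚ_[p]) :=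
  {g | (∀ i : Fin n, entry p n g i i = 1) ∧ ∀ i j : Fin n, j < i → entry p n g i j = 0}

/-- The upper triangular Borel subgroup `B`. -/
def Bset : Set (GL (Fin n) ℚ_[p]) :=
  {g | ∀ i j : Fin n, j < i → entry p n g i j = 0}

/-- Permutation matrix `w_σ` of `σ` as an element of `GL n ℚ_[p]`, in the convention
`w_σ · e_j = e_{σ(j)}` (entries `(w_σ)_{ij} = δ_{i, σ(j)}`). -/
noncomputable def permGL (σ : Equiv.Perm (Fin n)) : GL (Fin n) ℚ_[p] :=
  Matrix.GeneralLinearGroup.mkOfDetNeZero ((σ.permMatrix ℚ_[p])ᵀ) (by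
    rw [Matrix.det_transpose, Matrix.det_permutation]
    exact_mod_cast Int.cast_ne_zero.mpr (Equiv.Perm.sign σ).ne_zero)

/-- The elementary matrix `I + t·E_{ij}` as an element of `GL n ℚ_[p]`. -/
noncomputable def elemGL (i j : Fin n) (hij : i ≠ j) (t : ℚ_[p]) : GL (Fin n) ℚ_[p] :=
  Matrix.GeneralLinearGroup.mkOfDetNeZero (Matrix.transvection i j t) (by
    rw [Matrix.det_transvection_of_ne i j hij]
    exact one_ne_zero)

/-- The set of inversions `Inv(σ) = {(i,j) : i < j, σ⁻¹ i > σ⁻¹ j}`. -/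
def InvSet (σ : Equiv.Perm (Fin n)) : Finset (Fin n × Fin n) :=
  Finset.univ.filter fun ij => ij.1 < ij.2 ∧ σ⁻¹ ij.2 < σ⁻¹ ij.1

/-- The length `ℓ(σ)` (number of inversions) of `σ`. -/
def len (σ : Equiv.Perm (Fin n)) : ℕ := (InvSet n σ).card

/-- `i+1` as an element of `Fin n`. -/
def finSucc (i : Fin n) (h : (i : ℕ) + 1 < n) : Fin n := ⟨(i : ℕ) + 1, h⟩

theorem finSucc_ne (i : Fin n) (h : (i : ℕ) + 1 < n) : i ≠ finSucc n i h := by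
  simp [finSucc, Fin.ext_iff]

/-- The value of `χδ_B` at `b`, defined through the diagonal entries of `b`:
`(χδ_B)(b) = ∏_{i=1}^n z_i^{v(b_i)} p^{-(n+1-2i) v(b_i)}`. -/
noncomputable def chiDelta (z : Fin n → ℂˣ) (d : GL (Fin n) ℚ_[p]) : ℂ :=
  ∏ i : Fin n, ((z i : ℂ) ^ (entry p n d i i).valuation *
    (p : ℂ) ^ (-(((n : ℤ) + 1) - 2 * ((i : ℕ) + 1 : ℤ)) * (entry p n d i i).valuation))

/-- The character `ψ(u) = ∏_{i=1}^{n-1} ψ₀(u_{i,i+1})` of `N`, built from an additive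
character `ψ₀` of `ℚ_p`. -/
noncomputable def psiN (ψ₀ : ℚ_[p] → ℂ) (u : GL (Fin n) ℚ_[p]) : ℂ :=
  ∏ i : Fin n, if h : (i : ℕ) + 1 < n then ψ₀ (entry p n u i (finSucc n i h)) else 1

/-- `λ(d)` is `σ`-dominant: for all adjacent indices,
`v(d_i) - v(d_{i+1}) ≥ 0` if `σ⁻¹ i < σ⁻¹(i+1)`, and `≥ -1` if `σ⁻¹ i > σ⁻¹(i+1)`. -/
def IsDom (σ : Equiv.Perm (Fin n)) (d : GL (Fin n) ℚ_[p]) : Prop :=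
  ∀ (i : Fin n) (h : (i : ℕ) + 1 < n),
    (σ⁻¹ i < σ⁻¹ (finSucc n i h) →
      0 ≤ (entry p n d i i).valuation
            - (entry p n d (finSucc n i h) (finSucc n i h)).valuation) ∧
    (σ⁻¹ (finSucc n i h) < σ⁻¹ i →
      -1 ≤ (entry p n d i i).valuation
            - (entry p n d (finSucc n i h) (finSucc n i h)).valuation)

/-- The dominant part `T⁺` of the diagonal torus: `v(d_1) ≥ … ≥ v(d_n)`. -/
def Tplus : Set (GL (Fin n) ℚ_[p]) :=
  {d | d ∈ Tset p n ∧ Antitone fun i : Fin n => (entry p n d i i).valuation}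

/-- The double coset `J g J`. -/
def dcos (g : GL (Fin n) ℚ_[p]) : Set (GL (Fin n) ℚ_[p]) :=
  {x | ∃ a ∈ Jset p n, ∃ b ∈ Jset p n, x = a * g * b}


private lemma aux_norm_sum_le {α : Type*} (s : Finset α) (f : α → ℚ_[p]) {C : ℝ} (hC : 0 ≤ C)
    (h : ∀ i ∈ s, ‖f i‖ ≤ C) : ‖∑ i ∈ s, f i‖ ≤ C := by
  classical
  induction s using Finset.induction_on with
  | empty => simpa using hC
  | @insert a s ha ih =>
      rw [Finset.sum_insert ha]
      exact le_trans (Padic.nonarchimedean _ _)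
        (max_le (h a (Finset.mem_insert_self a s))
          (ih fun i hi => h i (Finset.mem_insert_of_mem hi)))

private lemma aux_norm_sum_lt {α : Type*} (s : Finset α) (f : α → ℚ_[p]) {C : ℝ} (hC : 0 < C)
    (h : ∀ i ∈ s, ‖f i‖ < C) : ‖∑ i ∈ s, f i‖ < C := by
  classical
  induction s using Finset.induction_on with
  | empty => simpa using hC
  | @insert a s ha ih =>
      rw [Finset.sum_insert ha]
      exact lt_of_le_of_lt (Padic.nonarchimedean _ _)
        (max_lt (h a (Finset.mem_insert_self a s))
          (ih fun i hi => h i (Finset.mem_insert_of_mem hi)))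

private lemma aux_norm_mul_lt_left {x y : ℚ_[p]} (hx : ‖x‖ < 1) (hy : ‖y‖ ≤ 1) :
    ‖x * y‖ < 1 := by
  rw [norm_mul]
  calc ‖x‖ * ‖y‖ ≤ ‖x‖ * 1 := by
        exact mul_le_mul_of_nonneg_left hy (norm_nonneg x)
    _ = ‖x‖ := mul_one _
    _ < 1 := hx

private lemma aux_norm_mul_lt_right {x y : ℚ_[p]} (hx : ‖x‖ ≤ 1) (hy : ‖y‖ < 1) :
    ‖x * y‖ < 1 := by
  rw [mul_comm]; exact aux_norm_mul_lt_left p hy hx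

private lemma aux_norm_mul_le {x y : ℚ_[p]} (hx : ‖x‖ ≤ 1) (hy : ‖y‖ ≤ 1) :
    ‖x * y‖ ≤ 1 := by
  rw [norm_mul]
  calc ‖x‖ * ‖y‖ ≤ 1 * 1 := mul_le_mul hx hy (norm_nonneg _) zero_le_one
    _ = 1 := mul_one _

private lemma entry_mul (g h : GL (Fin n) ℚ_[p]) (i j : Fin n) :
    entry p n (g * h) i j = ∑ k, entry p n g i k * entry p n h k j := by
  simp [entry, Matrix.mul_apply]

/-- Lower unitriangular with strictly-lower entries of norm `< 1`. -/
private def LowP (g : GL (Fin n) ℚ_[p]) : Prop :=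
  (∀ i, entry p n g i i = 1) ∧ (∀ i j : Fin n, i < j → entry p n g i j = 0) ∧
    (∀ i j : Fin n, j < i → ‖entry p n g i j‖ < 1)

private lemma lowP_norm_le {g : GL (Fin n) ℚ_[p]} (hg : LowP p n g) (i j : Fin n) :
    ‖entry p n g i j‖ ≤ 1 := by
  rcases lt_trichotomy i j with h | h | h
  · rw [hg.2.1 i j h, norm_zero]; exact zero_le_one
  · rw [h, hg.1 j, norm_one]
  · exact le_of_lt (hg.2.2 i j h)

private lemma lowP_one : LowP p n 1 := by
  refine ⟨fun i => by simp [entry], fun i j h => ?_, fun i j h => ?_⟩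
  · simp [entry, Matrix.one_apply, Fin.ne_of_lt h]
  · simp [entry, Matrix.one_apply, (Fin.ne_of_lt h).symm]

private lemma lowP_mul {g h : GL (Fin n) ℚ_[p]} (hg : LowP p n g) (hh : LowP p n h) :
    LowP p n (g * h) := by
  refine ⟨fun i => ?_, fun i j hij => ?_, fun i j hij => ?_⟩
  · rw [entry_mul, Finset.sum_eq_single i]
    · rw [hg.1, hh.1, one_mul]
    · intro k _ hk
      rcases lt_or_gt_of_ne hk with hlt | hlt
      · rw [hh.2.1 k i hlt, mul_zero]
      · rw [hg.2.1 i k hlt, zero_mul]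
    · intro habs; exact absurd (Finset.mem_univ i) habs
  · rw [entry_mul]
    apply Finset.sum_eq_zero
    intro k _
    rcases le_or_gt k i with hk | hk
    · rw [hh.2.1 k j (lt_of_le_of_lt hk hij), mul_zero]
    · rw [hg.2.1 i k hk, zero_mul]
  · rw [entry_mul]
    apply aux_norm_sum_lt p _ _ one_pos
    intro k _
    rcases le_or_gt k j with hk | hk
    · exact aux_norm_mul_lt_left p (hg.2.2 i k (lt_of_le_of_lt hk hij)) (lowP_norm_le p n hh k j)
    · exact aux_norm_mul_lt_right p (lowP_norm_le p n hg i k) (hh.2.2 k j hk)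

private lemma jset_mul {g h : GL (Fin n) ℚ_[p]} (hg : g ∈ Jset p n) (hh : h ∈ Jset p n) :
    g * h ∈ Jset p n := by
  refine ⟨fun i j => ?_, fun i j => ?_, fun i j hij => ?_⟩
  · rw [entry_mul]
    exact aux_norm_sum_le p _ _ zero_le_one fun k _ => aux_norm_mul_le p (hg.1 i k) (hh.1 k j)
  · rw [_root_.mul_inv_rev, entry_mul]
    exact aux_norm_sum_le p _ _ zero_le_one fun k _ => aux_norm_mul_le p (hh.2.1 i k) (hg.2.1 k j)
  · rw [entry_mul]
    apply aux_norm_sum_lt p _ _ one_pos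
    intro k _
    rcases le_or_gt k j with hk | hk
    · exact aux_norm_mul_lt_left p (hg.2.2 i k (lt_of_le_of_lt hk hij)) (hh.1 k j)
    · exact aux_norm_mul_lt_right p (hg.1 i k) (hh.2.2 k j hk)

private lemma pair_mem_jset {g g' : GL (Fin n) ℚ_[p]} (hg : LowP p n g) (hg' : LowP p n g')
    (hgg' : g * g' = 1) : g ∈ Jset p n := by
  have hinv : g' = g⁻¹ := eq_inv_of_mul_eq_one_right hgg'
  exact ⟨lowP_norm_le p n hg, fun i j => hinv ▸ lowP_norm_le p n hg' i j, hg.2.2⟩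

private lemma aux_exists_lt (τ : Equiv.Perm (Fin n)) (hτ : τ ≠ 1) : ∃ i, i < τ i := by
  classical
  have hs : (Finset.univ.filter fun i : Fin n => τ i ≠ i).Nonempty := by
    by_contra hcon
    apply hτ
    apply Equiv.ext
    intro i
    by_contra hi
    exact hcon ⟨i, Finset.mem_filter.mpr ⟨Finset.mem_univ i, hi⟩⟩
  set s := Finset.univ.filter fun i : Fin n => τ i ≠ i with hsdef
  set i := s.min' hs with hidef
  have hi : τ i ≠ i := (Finset.mem_filter.mp (s.min'_mem hs)).2
  refine ⟨i, ?_⟩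
  by_contra hcon
  have hlt : τ i < i := lt_of_le_of_ne (not_lt.mp hcon) hi
  have hmoved : τ (τ i) = τ i := by
    by_contra hmm
    have : i ≤ τ i := s.min'_le (τ i) (Finset.mem_filter.mpr ⟨Finset.mem_univ _, hmm⟩)
    exact absurd hlt (not_lt.mpr this)
  exact hi (τ.injective hmoved)

private lemma jset_diag_norm_one {g : GL (Fin n) ℚ_[p]} (hg : g ∈ Jset p n) (k : Fin n) :
    ‖entry p n g k k‖ = 1 := by
  classical
  have hterm : ∀ (h : GL (Fin n) ℚ_[p]) (τ : Equiv.Perm (Fin n)),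
      ‖Equiv.Perm.sign τ • ∏ i, (h : Matrix (Fin n) (Fin n) ℚ_[p]) (τ i) i‖ =
        ‖∏ i, (h : Matrix (Fin n) (Fin n) ℚ_[p]) (τ i) i‖ := by
    intro h τ
    rcases Int.units_eq_one_or (Equiv.Perm.sign τ) with hs | hs <;> rw [hs] <;>
      simp [Units.smul_def]
  have hprodle : ∀ (h : GL (Fin n) ℚ_[p]), (∀ i j, ‖entry p n h i j‖ ≤ 1) →
      ∀ τ : Equiv.Perm (Fin n), ‖∏ i, (h : Matrix (Fin n) (Fin n) ℚ_[p]) (τ i) i‖ ≤ 1 := by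
    intro h hb τ
    rw [norm_prod]
    exact Finset.prod_le_one (fun i _ => norm_nonneg _) (fun i _ => hb (τ i) i)
  have hdetle : ∀ (h : GL (Fin n) ℚ_[p]), (∀ i j, ‖entry p n h i j‖ ≤ 1) →
      ‖Matrix.det (h : Matrix (Fin n) (Fin n) ℚ_[p])‖ ≤ 1 := by
    intro h hb
    rw [Matrix.det_apply]
    apply aux_norm_sum_le p _ _ zero_le_one
    intro τ _
    rw [hterm h τ]
    exact hprodle h hb τ
  have hdet1 : Matrix.det (g : Matrix (Fin n) (Fin n) ℚ_[p]) *
      Matrix.det ((g⁻¹ : GL (Fin n) ℚ_[p]) : Matrix (Fin n) (Fin n) ℚ_[p]) = 1 := by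
    rw [← Matrix.det_mul, ← Units.val_mul, mul_inv_cancel, Units.val_one, Matrix.det_one]
  have hdnorm : ‖Matrix.det (g : Matrix (Fin n) (Fin n) ℚ_[p])‖ = 1 := by
    have h1 := hdetle g hg.1
    have h2 := hdetle g⁻¹ hg.2.1
    have h3 : ‖Matrix.det (g : Matrix (Fin n) (Fin n) ℚ_[p])‖ *
        ‖Matrix.det ((g⁻¹ : GL (Fin n) ℚ_[p]) : Matrix (Fin n) (Fin n) ℚ_[p])‖ = 1 := by
      rw [← norm_mul, hdet1, norm_one]
    nlinarith [norm_nonneg (Matrix.det (g : Matrix (Fin n) (Fin n) ℚ_[p]))]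
  have hrest : ‖∑ τ ∈ Finset.univ.erase (1 : Equiv.Perm (Fin n)),
      Equiv.Perm.sign τ • ∏ i, (g : Matrix (Fin n) (Fin n) ℚ_[p]) (τ i) i‖ < 1 := by
    apply aux_norm_sum_lt p _ _ one_pos
    intro τ hτ
    have hτ1 : τ ≠ 1 := (Finset.mem_erase.mp hτ).1
    obtain ⟨i, hilt⟩ := aux_exists_lt n τ hτ1
    rw [hterm g τ, ← Finset.mul_prod_erase _ _ (Finset.mem_univ i), norm_mul]
    have h1 : ‖(g : Matrix (Fin n) (Fin n) ℚ_[p]) (τ i) i‖ < 1 := hg.2.2 (τ i) i hilt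
    have h2 : ‖∏ j ∈ Finset.univ.erase i, (g : Matrix (Fin n) (Fin n) ℚ_[p]) (τ j) j‖ ≤ 1 := by
      rw [norm_prod]
      exact Finset.prod_le_one (fun j _ => norm_nonneg _) (fun j _ => hg.1 (τ j) j)
    nlinarith [norm_nonneg ((g : Matrix (Fin n) (Fin n) ℚ_[p]) (τ i) i)]
  have hsplit : Matrix.det (g : Matrix (Fin n) (Fin n) ℚ_[p]) =
      (∏ i, (g : Matrix (Fin n) (Fin n) ℚ_[p]) i i) +
      ∑ τ ∈ Finset.univ.erase (1 : Equiv.Perm (Fin n)),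
        Equiv.Perm.sign τ • ∏ i, (g : Matrix (Fin n) (Fin n) ℚ_[p]) (τ i) i := by
    rw [Matrix.det_apply, ← Finset.add_sum_erase _ _ (Finset.mem_univ (1 : Equiv.Perm (Fin n)))]
    congr 1
    simp
  have hdiagprod : ‖∏ i, (g : Matrix (Fin n) (Fin n) ℚ_[p]) i i‖ = 1 := by
    have hle : ‖∏ i, (g : Matrix (Fin n) (Fin n) ℚ_[p]) i i‖ ≤ 1 := by
      rw [norm_prod]
      exact Finset.prod_le_one (fun i _ => norm_nonneg _) (fun i _ => hg.1 i i)
    have hge : 1 ≤ ‖∏ i, (g : Matrix (Fin n) (Fin n) ℚ_[p]) i i‖ := by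
      by_contra hcon
      push_neg at hcon
      have hna := Padic.nonarchimedean ((∏ i, (g : Matrix (Fin n) (Fin n) ℚ_[p]) i i))
        (∑ τ ∈ Finset.univ.erase (1 : Equiv.Perm (Fin n)),
          Equiv.Perm.sign τ • ∏ i, (g : Matrix (Fin n) (Fin n) ℚ_[p]) (τ i) i)
      rw [← hsplit, hdnorm] at hna
      rcases max_cases ‖∏ i, (g : Matrix (Fin n) (Fin n) ℚ_[p]) i i‖
          ‖∑ τ ∈ Finset.univ.erase (1 : Equiv.Perm (Fin n)),
          Equiv.Perm.sign τ • ∏ i, (g : Matrix (Fin n) (Fin n) ℚ_[p]) (τ i) i‖ with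
        ⟨heq, _⟩ | ⟨heq, _⟩ <;> rw [heq] at hna <;> linarith
    linarith
  have hfact := Finset.mul_prod_erase Finset.univ
    (fun i => (g : Matrix (Fin n) (Fin n) ℚ_[p]) i i) (Finset.mem_univ k)
  have hsplit2 : ‖(g : Matrix (Fin n) (Fin n) ℚ_[p]) k k‖ *
      ‖∏ i ∈ Finset.univ.erase k, (g : Matrix (Fin n) (Fin n) ℚ_[p]) i i‖ = 1 := by
    rw [← norm_mul, hfact, hdiagprod]
  have h2 : ‖∏ i ∈ Finset.univ.erase k, (g : Matrix (Fin n) (Fin n) ℚ_[p]) i i‖ ≤ 1 := by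
    rw [norm_prod]
    exact Finset.prod_le_one (fun i _ => norm_nonneg _) (fun i _ => hg.1 i i)
  have h3 : ‖(g : Matrix (Fin n) (Fin n) ℚ_[p]) k k‖ ≤ 1 := hg.1 k k
  show ‖(g : Matrix (Fin n) (Fin n) ℚ_[p]) k k‖ = 1
  nlinarith [norm_nonneg ((g : Matrix (Fin n) (Fin n) ℚ_[p]) k k),
    norm_nonneg (∏ i ∈ Finset.univ.erase k, (g : Matrix (Fin n) (Fin n) ℚ_[p]) i i)]

private lemma elemGL_coe (i j : Fin n) (hij : i ≠ j) (t : ℚ_[p]) :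
    ((elemGL p n i j hij t : GL (Fin n) ℚ_[p]) : Matrix (Fin n) (Fin n) ℚ_[p]) =
      Matrix.transvection i j t := rfl

private lemma elemGL_mul_neg (i j : Fin n) (hij : i ≠ j) (t : ℚ_[p]) :
    elemGL p n i j hij t * elemGL p n i j hij (-t) = 1 := by
  apply Units.ext
  rw [Units.val_mul, elemGL_coe, elemGL_coe,
    Matrix.transvection_mul_transvection_same i j hij, add_neg_cancel, Matrix.transvection_zero,
    Units.val_one]

private lemma transvection_apply' (i j r s : Fin n) (t : ℚ_[p]) :
    Matrix.transvection i j t r s = (if r = s then 1 else 0) + (if i = r ∧ j = s then t else 0) := by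
  simp [Matrix.transvection, Matrix.add_apply, Matrix.one_apply, Matrix.single_apply,
    Matrix.of_apply]

private lemma lowP_elemGL (i j : Fin n) (hji : j < i) (t : ℚ_[p]) (ht : ‖t‖ < 1) :
    LowP p n (elemGL p n i j (Fin.ne_of_gt hji) t) := by
  have hij : i ≠ j := Fin.ne_of_gt hji
  refine ⟨fun r => ?_, fun r s hrs => ?_, fun r s hsr => ?_⟩
  · show Matrix.transvection i j t r r = 1
    rw [transvection_apply', if_pos rfl, if_neg, add_zero]
    rintro ⟨rfl, rfl⟩; exact hij rfl
  · show Matrix.transvection i j t r s = 0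
    rw [transvection_apply', if_neg (Fin.ne_of_lt hrs), if_neg, add_zero]
    rintro ⟨rfl, rfl⟩; exact absurd hrs (not_lt.mpr (le_of_lt hji))
  · show ‖Matrix.transvection i j t r s‖ < 1
    rw [transvection_apply', if_neg (Fin.ne_of_gt hsr), zero_add]
    split_ifs with h
    · exact ht
    · rw [norm_zero]; exact one_pos

private lemma aux_idx_inj {i j r s : Fin n} (h : (j:ℕ)*n + (i:ℕ) = (s:ℕ)*n + (r:ℕ)) :
    j = s ∧ i = r := by
  have hi := i.isLt; have hr := r.isLt
  have hjs : (j:ℕ) = (s:ℕ) := by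
    rcases lt_trichotomy (j:ℕ) (s:ℕ) with hlt | he | hlt
    · have h1 : ((j:ℕ)+1)*n ≤ (s:ℕ)*n := Nat.mul_le_mul_right n hlt
      have h2 : ((j:ℕ)+1)*n = (j:ℕ)*n + n := by ring
      omega
    · exact he
    · have h1 : ((s:ℕ)+1)*n ≤ (j:ℕ)*n := Nat.mul_le_mul_right n hlt
      have h2 : ((s:ℕ)+1)*n = (s:ℕ)*n + n := by ring
      omega
  have hn : (j:ℕ)*n = (s:ℕ)*n := by rw [hjs]
  exact ⟨Fin.ext hjs, Fin.ext (by omega)⟩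

private lemma aux_idx_lt {s j i : Fin n} (hsj : (s:ℕ) < (j:ℕ)) :
    (s:ℕ)*n + (j:ℕ) < (j:ℕ)*n + (i:ℕ) := by
  have hj := j.isLt
  have h1 : ((s:ℕ)+1)*n ≤ (j:ℕ)*n := Nat.mul_le_mul_right n hsj
  have h2 : ((s:ℕ)+1)*n = (s:ℕ)*n + n := by ring
  omega

private lemma elim_lemma (a : GL (Fin n) ℚ_[p]) (ha : a ∈ Jset p n) (k : ℕ) :
    ∃ L Li : GL (Fin n) ℚ_[p], L * Li = 1 ∧ LowP p n L ∧ LowP p n Li ∧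
      (L * a) ∈ Jset p n ∧
      ∀ i j : Fin n, j < i → (j : ℕ) * n + (i : ℕ) < k → entry p n (L * a) i j = 0 := by
  induction k with
  | zero =>
      exact ⟨1, 1, mul_one 1, lowP_one p n, lowP_one p n, by simpa using ha,
        fun i j _ h => absurd h (Nat.not_lt_zero _)⟩
  | succ k ih =>
      obtain ⟨L, Li, hLLi, hL, hLi, hJ, hz⟩ := ih
      by_cases hex : ∃ i j : Fin n, j < i ∧ (j:ℕ)*n + (i:ℕ) = k
      · obtain ⟨i, j, hji, hk⟩ := hex
        have hij : i ≠ j := Fin.ne_of_gt hji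
        have hcjj : ‖entry p n (L * a) j j‖ = 1 := jset_diag_norm_one p n hJ j
        have hcjj0 : entry p n (L * a) j j ≠ 0 := by
          intro h; rw [h, norm_zero] at hcjj; norm_num at hcjj
        set t : ℚ_[p] := -(entry p n (L * a) i j / entry p n (L * a) j j) with htdef
        have ht : ‖t‖ < 1 := by
          rw [htdef, norm_neg, norm_div, hcjj, div_one]
          exact hJ.2.2 i j hji
        have htn : ‖-t‖ < 1 := by rw [norm_neg]; exact ht
        set E := elemGL p n i j hij t with hEdef
        set E' := elemGL p n i j hij (-t) with hE'def
        have hEE' : E * E' = 1 := elemGL_mul_neg p n i j hij t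
        have hElow : LowP p n E := lowP_elemGL p n i j hji t ht
        have hE'low : LowP p n E' := lowP_elemGL p n i j hji (-t) htn
        have hEJ : E ∈ Jset p n := pair_mem_jset p n hElow hE'low hEE'
        refine ⟨E * L, Li * E', ?_, lowP_mul p n hElow hL, lowP_mul p n hLi hE'low, ?_, ?_⟩
        · rw [mul_assoc, ← mul_assoc L Li, hLLi, one_mul, hEE']
        · rw [mul_assoc]; exact jset_mul p n hEJ hJ
        · intro r s hsr hlt
          have hmem : entry p n (E * L * a) r s = entry p n (E * (L * a)) r s := by
            rw [mul_assoc]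
          rw [hmem]
          have hcoe : entry p n (E * (L * a)) r s =
              (Matrix.transvection i j t * ((L * a : GL (Fin n) ℚ_[p]) :
                Matrix (Fin n) (Fin n) ℚ_[p])) r s := by
            show ((E * (L * a) : GL (Fin n) ℚ_[p]) : Matrix (Fin n) (Fin n) ℚ_[p]) r s = _
            rw [Units.val_mul, hEdef, elemGL_coe]
          rw [hcoe]
          by_cases hr : r = i
          · subst hr
            rw [Matrix.transvection_mul_apply_same]
            by_cases hs : s = j
            · subst hs
              show entry p n (L * a) r s + t * entry p n (L * a) s s = 0
              rw [htdef]
              field_simp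
              ring
            · -- s ≠ j, index below k since ≠ k
              have hne : (s:ℕ)*n + (r:ℕ) ≠ k := by
                intro he
                rw [← hk] at he
                exact hs (aux_idx_inj n he.symm).1.symm
              have hltk : (s:ℕ)*n + (r:ℕ) < k := by omega
              have hsj : (s:ℕ) < (j:ℕ) := by
                rw [← hk] at hltk
                have hsn : (s:ℕ)*n < (j:ℕ)*n := by omega
                exact lt_of_mul_lt_mul_right hsn (Nat.zero_le n)
              have h1 : entry p n (L * a) r s = 0 := hz r s hsr hltk
              have h2 : entry p n (L * a) j s = 0 := by
                apply hz j s (by exact_mod_cast hsj)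
                rw [← hk]
                exact aux_idx_lt n hsj
              show entry p n (L * a) r s + t * entry p n (L * a) j s = 0
              rw [h1, h2, mul_zero, add_zero]
          · rw [Matrix.transvection_mul_apply_of_ne i j r s hr]
            apply hz r s hsr
            have hne : (s:ℕ)*n + (r:ℕ) ≠ k := by
              intro he
              rw [← hk] at he
              exact hr (aux_idx_inj n he.symm).2.symm
            omega
      · refine ⟨L, Li, hLLi, hL, hLi, hJ, fun r s hsr hlt => hz r s hsr ?_⟩
        have hne : (s:ℕ)*n + (r:ℕ) ≠ k := fun h => hex ⟨r, s, hsr, h⟩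
        omega

private lemma permGL_apply (σ : Equiv.Perm (Fin n)) (i j : Fin n) :
    ((permGL p n σ : GL (Fin n) ℚ_[p]) : Matrix (Fin n) (Fin n) ℚ_[p]) i j =
      if σ j = i then 1 else 0 := by
  show ((σ.permMatrix ℚ_[p])ᵀ) i j = _
  simp [Equiv.Perm.permMatrix, PEquiv.toMatrix_apply, Equiv.toPEquiv_apply, Matrix.transpose_apply]

private lemma dW_apply (σ : Equiv.Perm (Fin n)) (d : GL (Fin n) ℚ_[p]) (hdT : d ∈ Tset p n)
    (m : Fin n → ℤ) (hdent : ∀ k : Fin n, entry p n d k k = (p : ℚ_[p]) ^ (m k)) (i j : Fin n) :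
    entry p n (d * permGL p n σ) i j = if σ j = i then (p:ℚ_[p])^(m i) else 0 := by
  rw [entry_mul, Finset.sum_eq_single i]
  · rw [show entry p n (permGL p n σ) i j =
        ((permGL p n σ : GL (Fin n) ℚ_[p]) : Matrix (Fin n) (Fin n) ℚ_[p]) i j from rfl,
      permGL_apply, hdent i]
    split_ifs <;> simp
  · intro k _ hk
    rw [hdT i k (Ne.symm hk), zero_mul]
  · intro habs; exact absurd (Finset.mem_univ i) habs

private lemma entry_conj (σ : Equiv.Perm (Fin n)) (d : GL (Fin n) ℚ_[p]) (hdT : d ∈ Tset p n)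
    (m : Fin n → ℤ) (hdent : ∀ k : Fin n, entry p n d k k = (p : ℚ_[p]) ^ (m k))
    (v : GL (Fin n) ℚ_[p]) (i j : Fin n) :
    entry p n ((d * permGL p n σ)⁻¹ * v * (d * permGL p n σ)) i j =
      (p:ℚ_[p])^(m (σ j) - m (σ i)) * entry p n v (σ i) (σ j) := by
  have hp0 : (p:ℚ_[p]) ≠ 0 := by
    exact_mod_cast Nat.cast_ne_zero.mpr (Fact.out : p.Prime).ne_zero
  set W : GL (Fin n) ℚ_[p] := d * permGL p n σ with hWdef
  set Cmat : Matrix (Fin n) (Fin n) ℚ_[p] :=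
    Matrix.of (fun i j => (p:ℚ_[p])^(m (σ j) - m (σ i)) * entry p n v (σ i) (σ j)) with hCdef
  have hW : ∀ r s : Fin n, (W : Matrix (Fin n) (Fin n) ℚ_[p]) r s =
      if σ s = r then (p:ℚ_[p])^(m r) else 0 := fun r s => dW_apply p n σ d hdT m hdent r s
  have key : (W : Matrix (Fin n) (Fin n) ℚ_[p]) * Cmat =
      (v : Matrix (Fin n) (Fin n) ℚ_[p]) * (W : Matrix (Fin n) (Fin n) ℚ_[p]) := by
    ext r s
    rw [Matrix.mul_apply, Matrix.mul_apply]
    have hL : ∑ k, (W : Matrix (Fin n) (Fin n) ℚ_[p]) r k * Cmat k s =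
        (p:ℚ_[p])^(m (σ s)) * entry p n v r (σ s) := by
      rw [Finset.sum_eq_single (σ⁻¹ r)]
      · rw [hW r (σ⁻¹ r), if_pos (show σ (σ⁻¹ r) = r from Equiv.apply_symm_apply σ r)]
        show (p:ℚ_[p])^(m r) *
          ((p:ℚ_[p])^(m (σ s) - m (σ (σ⁻¹ r))) * entry p n v (σ (σ⁻¹ r)) (σ s)) = _
        rw [Equiv.Perm.coe_inv, Equiv.apply_symm_apply, ← mul_assoc, ← zpow_add₀ hp0]
        congr 2
        ring
      · intro k _ hk
        rw [hW r k, if_neg, zero_mul]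
        intro he; exact hk (by rw [← he, Equiv.Perm.coe_inv, Equiv.symm_apply_apply])
      · intro h; exact absurd (Finset.mem_univ _) h
    have hR : ∑ k, (v : Matrix (Fin n) (Fin n) ℚ_[p]) r k *
        (W : Matrix (Fin n) (Fin n) ℚ_[p]) k s =
        (p:ℚ_[p])^(m (σ s)) * entry p n v r (σ s) := by
      rw [Finset.sum_eq_single (σ s)]
      · rw [hW (σ s) s, if_pos rfl, mul_comm]; rfl
      · intro k _ hk
        rw [hW k s, if_neg (fun he => hk he.symm), mul_zero]
      · intro h; exact absurd (Finset.mem_univ _) h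
    rw [hL, hR]
  have hC : ((W⁻¹ * v * W : GL (Fin n) ℚ_[p]) : Matrix (Fin n) (Fin n) ℚ_[p]) = Cmat := by
    calc ((W⁻¹ * v * W : GL (Fin n) ℚ_[p]) : Matrix (Fin n) (Fin n) ℚ_[p])
        = ((W⁻¹ : GL (Fin n) ℚ_[p]) : Matrix (Fin n) (Fin n) ℚ_[p]) *
            ((v : Matrix (Fin n) (Fin n) ℚ_[p]) * (W : Matrix (Fin n) (Fin n) ℚ_[p])) := by
          rw [Units.val_mul, Units.val_mul, mul_assoc]
      _ = ((W⁻¹ : GL (Fin n) ℚ_[p]) : Matrix (Fin n) (Fin n) ℚ_[p]) *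
            ((W : Matrix (Fin n) (Fin n) ℚ_[p]) * Cmat) := by rw [key]
      _ = ((W⁻¹ * W : GL (Fin n) ℚ_[p]) : Matrix (Fin n) (Fin n) ℚ_[p]) * Cmat := by
          rw [← mul_assoc, ← Units.val_mul]
      _ = Cmat := by rw [inv_mul_cancel, Units.val_one, one_mul]
  show ((W⁻¹ * v * W : GL (Fin n) ℚ_[p]) : Matrix (Fin n) (Fin n) ℚ_[p]) i j = _
  rw [hC]
  rfl

private lemma norm_p_zpow_le' {e : ℤ} (he : 0 ≤ e) : ‖(p:ℚ_[p])^e‖ ≤ 1 := by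
  rw [Padic.norm_p_zpow]
  have hp : (1:ℝ) < p := by exact_mod_cast (Fact.out : p.Prime).one_lt
  calc ((p:ℝ))^(-e) ≤ (p:ℝ)^(0:ℤ) := zpow_le_zpow_right₀ hp.le (by omega)
    _ = 1 := zpow_zero _

private lemma norm_p_zpow_lt' {e : ℤ} (he : 1 ≤ e) : ‖(p:ℚ_[p])^e‖ < 1 := by
  rw [Padic.norm_p_zpow]
  have hp : (1:ℝ) < p := by exact_mod_cast (Fact.out : p.Prime).one_lt
  calc ((p:ℝ))^(-e) < (p:ℝ)^(0:ℤ) := zpow_lt_zpow_right₀ hp (by omega)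
    _ = 1 := zpow_zero _

private lemma m_adj (σ : Equiv.Perm (Fin n)) (m : Fin n → ℤ)
    (hmrec : ∀ (k : Fin n) (hk : (k : ℕ) + 1 < n),
      m k = m (finSucc n k hk) - if σ⁻¹ (finSucc n k hk) < σ⁻¹ k then 1 else 0)
    (a : Fin n) (hk : (a:ℕ) + 1 < n) :
    m a ≤ m (finSucc n a hk) ∧ (m a = m (finSucc n a hk) → σ⁻¹ a < σ⁻¹ (finSucc n a hk)) := by
  have hadj := hmrec a hk
  by_cases hc : σ⁻¹ (finSucc n a hk) < σ⁻¹ a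
  · rw [if_pos hc] at hadj
    exact ⟨by omega, fun he => absurd he (by omega)⟩
  · rw [if_neg hc] at hadj
    refine ⟨by omega, fun _ => ?_⟩
    have hne : σ⁻¹ a ≠ σ⁻¹ (finSucc n a hk) := fun he =>
      (finSucc_ne n a hk) ((σ⁻¹).injective he)
    exact lt_of_le_of_ne (not_lt.mp hc) hne

private lemma m_mono (σ : Equiv.Perm (Fin n)) (m : Fin n → ℤ)
    (hmrec : ∀ (k : Fin n) (hk : (k : ℕ) + 1 < n),
      m k = m (finSucc n k hk) - if σ⁻¹ (finSucc n k hk) < σ⁻¹ k then 1 else 0) :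
    ∀ (t : ℕ) (a b : Fin n), (a:ℕ) + t = (b:ℕ) →
      m a ≤ m b ∧ (m a = m b → σ⁻¹ a ≤ σ⁻¹ b) := by
  intro t
  induction t with
  | zero =>
      intro a b h
      have : a = b := Fin.ext (by omega)
      subst this
      exact ⟨le_refl _, fun _ => le_refl _⟩
  | succ t ih =>
      intro a b h
      have hk : (a:ℕ) + 1 < n := by have := b.isLt; omega
      have ha'v : ((finSucc n a hk : Fin n) : ℕ) = (a:ℕ) + 1 := rfl
      have hstep := m_adj n σ m hmrec a hk
      have hrest := ih (finSucc n a hk) b (by omega)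
      refine ⟨le_trans hstep.1 hrest.1, fun he => ?_⟩
      have h1 : m a = m (finSucc n a hk) := le_antisymm hstep.1 (he ▸ hrest.1)
      have h2 : m (finSucc n a hk) = m b := by omega
      exact le_trans (le_of_lt (hstep.2 h1)) (hrest.2 h2)

private lemma m_mono_le (σ : Equiv.Perm (Fin n)) (m : Fin n → ℤ)
    (hmrec : ∀ (k : Fin n) (hk : (k : ℕ) + 1 < n),
      m k = m (finSucc n k hk) - if σ⁻¹ (finSucc n k hk) < σ⁻¹ k then 1 else 0)
    {a b : Fin n} (hab : a ≤ b) : m a ≤ m b :=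
  (m_mono n σ m hmrec ((b:ℕ) - (a:ℕ)) a b (by omega)).1

private lemma m_strict (σ : Equiv.Perm (Fin n)) (m : Fin n → ℤ)
    (hmrec : ∀ (k : Fin n) (hk : (k : ℕ) + 1 < n),
      m k = m (finSucc n k hk) - if σ⁻¹ (finSucc n k hk) < σ⁻¹ k then 1 else 0)
    {a b : Fin n} (hab : a < b) (hji : ¬ σ⁻¹ a < σ⁻¹ b) : m a + 1 ≤ m b := by
  by_contra hcon
  push_neg at hcon
  have hle : m a ≤ m b := m_mono_le n σ m hmrec (le_of_lt hab)
  have heq : m a = m b := by omega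
  have hk : (a:ℕ) + 1 < n := by
    have hb := b.isLt
    have : (a:ℕ) < (b:ℕ) := hab
    omega
  have hstep := m_adj n σ m hmrec a hk
  have hrest := m_mono n σ m hmrec ((b:ℕ) - ((a:ℕ)+1)) (finSucc n a hk) b (by
    have hvv : ((finSucc n a hk : Fin n) : ℕ) = (a:ℕ)+1 := rfl
    have hab' : (a:ℕ) < (b:ℕ) := hab
    omega)
  have h1 : m a = m (finSucc n a hk) := le_antisymm hstep.1 (heq ▸ hrest.1)
  have h2 : m (finSucc n a hk) = m b := by omega
  exact hji (lt_of_lt_of_le (hstep.2 h1) (hrest.2 h2))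

/-- For every `σ ∈ S_n`, the double coset `J·d_σ·w_σ·J` is contained in
`N⁻_p·d_σ·w_σ·J`: every element can be written `l·d_σ·w_σ·j` with `l` lower
unitriangular with strictly-lower entries in `pℤ_p`, and `j ∈ J`.  Here
`d_σ = diag(p^{μ_1},…,p^{μ_n})` with `μ_n = 0` and `μ_i = μ_{i+1} - 1` if
`σ⁻¹(i) > σ⁻¹(i+1)`, `μ_i = μ_{i+1}` otherwise. -/
theorem double_coset_dw_subset (hn : 2 ≤ n) (σ : Equiv.Perm (Fin n))
    (m : Fin n → ℤ) (hmlast : m ⟨n - 1, by omega⟩ = 0)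
    (hmrec : ∀ (k : Fin n) (hk : (k : ℕ) + 1 < n),
      m k = m (finSucc n k hk)
        - if σ⁻¹ (finSucc n k hk) < σ⁻¹ k then 1 else 0)
    (d : GL (Fin n) ℚ_[p]) (hdT : d ∈ Tset p n)
    (hdent : ∀ k : Fin n, entry p n d k k = (p : ℚ_[p]) ^ (m k))
    (x : GL (Fin n) ℚ_[p]) (hx : x ∈ dcos p n (d * permGL p n σ)) :
    ∃ l : GL (Fin n) ℚ_[p],
      (∀ i : Fin n, entry p n l i i = 1) ∧
      (∀ i j : Fin n, i < j → entry p n l i j = 0) ∧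
      (∀ i j : Fin n, j < i → ‖entry p n l i j‖ < 1) ∧
      ∃ j ∈ Jset p n, x = l * (d * permGL p n σ) * j := by
  obtain ⟨A, hA, B, hB, hxeq⟩ := hx
  obtain ⟨L, Li, hLLi, hLlow, hLilow, hJu, hz⟩ := elim_lemma p n A hA (n*n)
  set u : GL (Fin n) ℚ_[p] := L * A with hudef
  have hupper : ∀ i j : Fin n, j < i → entry p n u i j = 0 := by
    intro i j hji
    apply hz i j hji
    have hi := i.isLt; have hj := j.isLt
    have h1 : ((j:ℕ)+1)*n ≤ n*n := Nat.mul_le_mul_right n hj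
    have h2 : ((j:ℕ)+1)*n = (j:ℕ)*n + n := by ring
    omega
  set W : GL (Fin n) ℚ_[p] := d * permGL p n σ with hWdef
  set C : GL (Fin n) ℚ_[p] := W⁻¹ * u * W with hCdef
  have hCent : ∀ i j : Fin n, entry p n C i j =
      (p:ℚ_[p])^(m (σ j) - m (σ i)) * entry p n u (σ i) (σ j) :=
    fun i j => entry_conj p n σ d hdT m hdent u i j
  have hCinv : C⁻¹ = W⁻¹ * u⁻¹ * W := by
    rw [hCdef]; group
  have hCinvent : ∀ i j : Fin n, entry p n C⁻¹ i j =
      (p:ℚ_[p])^(m (σ j) - m (σ i)) * entry p n u⁻¹ (σ i) (σ j) := by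
    intro i j; rw [hCinv]; exact entry_conj p n σ d hdT m hdent u⁻¹ i j
  have huinv_upper : ∀ i j : Fin n, j < i → entry p n u⁻¹ i j = 0 := by
    haveI := u.invertible
    have hbt : Matrix.BlockTriangular (u : Matrix (Fin n) (Fin n) ℚ_[p]) id :=
      fun i j h => hupper i j h
    have hbt2 := Matrix.blockTriangular_inv_of_blockTriangular hbt
    intro i j hji
    have h0 : ((u : Matrix (Fin n) (Fin n) ℚ_[p]))⁻¹ i j = 0 := hbt2 hji
    rw [entry, Matrix.coe_units_inv]
    exact h0
  have hCJ : C ∈ Jset p n := by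
    refine ⟨fun i j => ?_, fun i j => ?_, fun i j hji => ?_⟩
    · rw [hCent i j]
      rcases eq_or_ne (entry p n u (σ i) (σ j)) 0 with h0 | h0
      · rw [h0, mul_zero, norm_zero]; exact zero_le_one
      · have hσ : σ i ≤ σ j := by
          by_contra hcc
          exact h0 (hupper (σ i) (σ j) (lt_of_not_ge hcc))
        have he : 0 ≤ m (σ j) - m (σ i) := by
          have := m_mono_le n σ m hmrec hσ; omega
        exact aux_norm_mul_le p (norm_p_zpow_le' p he) (hJu.1 (σ i) (σ j))
    · rw [hCinvent i j]
      rcases eq_or_ne (entry p n u⁻¹ (σ i) (σ j)) 0 with h0 | h0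
      · rw [h0, mul_zero, norm_zero]; exact zero_le_one
      · have hσ : σ i ≤ σ j := by
          by_contra hcc
          exact h0 (huinv_upper (σ i) (σ j) (lt_of_not_ge hcc))
        have he : 0 ≤ m (σ j) - m (σ i) := by
          have := m_mono_le n σ m hmrec hσ; omega
        exact aux_norm_mul_le p (norm_p_zpow_le' p he) (hJu.2.1 (σ i) (σ j))
    · rw [hCent i j]
      rcases eq_or_ne (entry p n u (σ i) (σ j)) 0 with h0 | h0
      · rw [h0, mul_zero, norm_zero]; exact one_pos
      · have hσle : σ i ≤ σ j := by
          by_contra hcc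
          exact h0 (hupper (σ i) (σ j) (lt_of_not_ge hcc))
        have hσ : σ i < σ j :=
          lt_of_le_of_ne hσle (fun he => (Fin.ne_of_gt hji) (σ.injective he))
        have hstrict : m (σ i) + 1 ≤ m (σ j) := by
          apply m_strict n σ m hmrec hσ
          rw [Equiv.Perm.coe_inv, Equiv.symm_apply_apply, Equiv.symm_apply_apply]
          exact not_lt.mpr (le_of_lt hji)
        exact aux_norm_mul_lt_left p (norm_p_zpow_lt' p (by omega)) (hJu.1 (σ i) (σ j))
  refine ⟨Li, hLilow.1, hLilow.2.1, hLilow.2.2, C * B, jset_mul p n hCJ hB, ?_⟩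
  have hALiu : A = Li * u := by
    have hLiL : Li = L⁻¹ := eq_inv_of_mul_eq_one_right hLLi
    rw [hudef, hLiL, ← mul_assoc, inv_mul_cancel, one_mul]
  rw [hxeq, hALiu, hCdef]
  group
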